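/- arXiv:1204.2722 — 4 statements merged into one kernel-verified Lean document; each statement's English description precedes it below -/
import Mathlib

section
/- Let O₁, …, Oₙ be d×d complex matrices, each Hermitian, traceless (trace Oᵢ = 0), satisfying Oᵢ² = 1 (the identity matrix), and pairwise anticommuting: Oᵢ * Oⱼ = -(Oⱼ * Oᵢ) for all i ≠ j. Then for every d×d density matrix ρ, ∑_{i=1}^n (Re(trace(ρ * Oᵢ)))² ≤ 1. -/
open Matrix
open ComplexOrder

/-- A density matrix: positive semidefinite with trace 1. -/
def IsDensityMatrix {d : ℕ} (ρ : Matrix (Fin d) (Fin d) ℂ) : Prop :=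
  ρ.PosSemidef ∧ ρ.trace = 1

lemma aux_diag_nonneg {d : ℕ} {A : Matrix (Fin d) (Fin d) ℂ} (hA : A.PosSemidef)
    (i : Fin d) : 0 ≤ A i i := by
  exact hA.diag_nonneg

lemma aux_trace_nonneg {d : ℕ} {A : Matrix (Fin d) (Fin d) ℂ} (hA : A.PosSemidef) :
    0 ≤ A.trace := by
  rw [Matrix.trace]
  exact Finset.sum_nonneg fun i _ => aux_diag_nonneg hA i

lemma aux_trace_mul_nonneg {d : ℕ} {A B : Matrix (Fin d) (Fin d) ℂ}
    (hA : A.PosSemidef) (hB : B.PosSemidef) : 0 ≤ (A * B).trace := by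
  obtain ⟨C, rfl⟩ : ∃ C : Matrix (Fin d) (Fin d) ℂ, A = Cᴴ * C := by
    open scoped MatrixOrder in
    have h0 : 0 ≤ A := Matrix.nonneg_iff_posSemidef.mpr hA
    open scoped MatrixOrder in
    refine ⟨CFC.sqrt A, ?_⟩
    open scoped MatrixOrder in
    have hsa : (CFC.sqrt A)ᴴ = CFC.sqrt A := (CFC.sqrt_nonneg A).isSelfAdjoint
    open scoped MatrixOrder in
    rw [hsa, CFC.sqrt_mul_sqrt_self A h0]
  rw [Matrix.mul_assoc, Matrix.trace_mul_comm]
  exact aux_trace_nonneg (hB.mul_mul_conjTranspose_same C)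

lemma aux_herm_real_smul {d : ℕ} (r : ℝ) {A : Matrix (Fin d) (Fin d) ℂ}
    (h : A.IsHermitian) : ((r : ℂ) • A).IsHermitian := by
  unfold Matrix.IsHermitian
  rw [Matrix.conjTranspose_smul, h.eq, Complex.star_def, Complex.conj_ofReal]

/-- For Hermitian, traceless, pairwise anticommuting involutions `O i`, the sum of the
squared expectation values in any quantum state is at most 1. -/
theorem sum_sq_expectation_anticommuting_le_one {d n : ℕ}
    (O : Fin n → Matrix (Fin d) (Fin d) ℂ)
    (hherm : ∀ i, (O i).IsHermitian)
    (htr : ∀ i, (O i).trace = 0)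
    (hsq : ∀ i, O i * O i = 1)
    (hanti : ∀ i j, i ≠ j → O i * O j = -(O j * O i))
    (ρ : Matrix (Fin d) (Fin d) ℂ) (hρ : IsDensityMatrix ρ) :
    ∑ i, ((ρ * O i).trace.re) ^ 2 ≤ 1 := by
  set t : Fin n → ℝ := fun i => (ρ * O i).trace.re with ht
  set s : ℝ := ∑ i, t i ^ 2 with hs
  show s ≤ 1
  have hs0 : 0 ≤ s := Finset.sum_nonneg fun i _ => sq_nonneg _
  rcases eq_or_lt_of_le hs0 with h0 | hspos
  · linarith
  set M : Matrix (Fin d) (Fin d) ℂ := ∑ i, (t i : ℂ) • O i with hM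
  -- M is Hermitian
  have hMherm : M.IsHermitian := by
    unfold Matrix.IsHermitian
    rw [hM, Matrix.conjTranspose_sum]
    exact Finset.sum_congr rfl fun i _ => (aux_herm_real_smul (t i) (hherm i)).eq
  -- M * M = s • 1
  have hMM : M * M = (s : ℂ) • 1 := by
    rw [hM, Finset.sum_mul_sum]
    have key : ∀ i j : Fin n, ((t i : ℂ) • O i) * ((t j : ℂ) • O j) =
        ((t i * t j : ℝ) : ℂ) • (O i * O j) := by
      intro i j
      rw [Matrix.smul_mul, Matrix.mul_smul, smul_smul]
      push_cast
      ring_nf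
    have split : ∀ i : Fin n, ∑ j, ((t i : ℂ) • O i) * ((t j : ℂ) • O j) =
        ((t i ^ 2 : ℝ) : ℂ) • 1 + ∑ j ∈ Finset.univ.erase i,
          ((t i * t j : ℝ) : ℂ) • (O i * O j) := by
      intro i
      rw [← Finset.add_sum_erase _ _ (Finset.mem_univ i), key, hsq i]
      congr 1
      · push_cast; rw [sq]
      · exact Finset.sum_congr rfl fun j _ => key i j
    rw [Finset.sum_congr rfl fun i _ => split i, Finset.sum_add_distrib,
      ← Finset.sum_smul, ← Complex.ofReal_sum]
    have hzero : ∑ i, ∑ j ∈ Finset.univ.erase i,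
        ((t i * t j : ℝ) : ℂ) • (O i * O j) = 0 := by
      rw [Finset.sum_sigma']
      refine Finset.sum_involution (fun p _ => ⟨p.2, p.1⟩) ?_ ?_ ?_ ?_
      · rintro ⟨i, j⟩ hij
        simp only [Finset.mem_sigma, Finset.mem_univ, Finset.mem_erase, true_and] at hij
        have := hanti j i hij.1
        simp only
        rw [this, smul_neg, mul_comm (t j)]
        exact add_neg_cancel _
      · rintro ⟨i, j⟩ hij _
        simp only [Finset.mem_sigma, Finset.mem_univ, Finset.mem_erase, true_and] at hij
        intro h
        exact hij.1 (congrArg Sigma.fst h)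
      · rintro ⟨i, j⟩ hij
        simp only [Finset.mem_sigma, Finset.mem_univ, Finset.mem_erase, true_and] at hij ⊢
        exact ⟨Ne.symm hij.1, trivial⟩
      · rintro ⟨i, j⟩ _; rfl
    rw [hzero, add_zero, ← hs]
  -- trace ρ M
  have htrM : (ρ * M).trace.re = s := by
    rw [hM, Finset.mul_sum, Matrix.trace_sum, Complex.re_sum]
    apply Finset.sum_congr rfl
    intro i _
    rw [Matrix.mul_smul, Matrix.trace_smul]
    rw [smul_eq_mul, Complex.re_ofReal_mul, sq]
  -- N = √s • 1 - M is PSD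
  set r : ℝ := Real.sqrt s with hr
  have hrpos : 0 < r := Real.sqrt_pos.mpr hspos
  have hr2 : r * r = s := Real.mul_self_sqrt hs0
  set N : Matrix (Fin d) (Fin d) ℂ := (r : ℂ) • 1 - M with hN
  have hNherm : N.IsHermitian :=
    (aux_herm_real_smul r Matrix.isHermitian_one).sub hMherm
  have hNN : Nᴴ * N = ((2 * r : ℝ) : ℂ) • N := by
    rw [hNherm.eq, hN, sub_mul, mul_sub, mul_sub, hMM]
    simp only [smul_mul_assoc, mul_smul_comm, one_mul, mul_one, smul_smul]
    have hsc : ((s : ℝ) : ℂ) = (r : ℂ) * (r : ℂ) := by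
      rw [← hr2]; push_cast; ring
    rw [hsc]
    push_cast
    module
  set c : ℝ := Real.sqrt (2 * r) with hc
  have hcpos : 0 < c := Real.sqrt_pos.mpr (by linarith)
  have hc2 : c * c = 2 * r := Real.mul_self_sqrt (by linarith)
  have hNfact : N = (((c⁻¹ : ℝ) : ℂ) • N)ᴴ * (((c⁻¹ : ℝ) : ℂ) • N) := by
    rw [Matrix.conjTranspose_smul, Complex.star_def, Complex.conj_ofReal,
      Matrix.smul_mul, Matrix.mul_smul, hNN, smul_smul, smul_smul]
    rw [← Complex.ofReal_mul, ← Complex.ofReal_mul]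
    have h1 : c⁻¹ * c⁻¹ * (2 * r) = 1 := by
      rw [← hc2]; field_simp
    rw [h1, Complex.ofReal_one, one_smul]
  have hNpsd : N.PosSemidef := by
    rw [hNfact]
    exact Matrix.posSemidef_conjTranspose_mul_self _
  -- trace(ρ N) ≥ 0
  have htrN : 0 ≤ (ρ * N).trace := aux_trace_mul_nonneg hρ.1 hNpsd
  have hexp : (ρ * N).trace = (r : ℂ) * ρ.trace - (ρ * M).trace := by
    rw [hN, mul_sub, Matrix.trace_sub, Matrix.mul_smul, mul_one, Matrix.trace_smul]
    simp [smul_eq_mul]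
  rw [hexp, hρ.2, mul_one] at htrN
  rw [Complex.le_def] at htrN
  have hre : 0 ≤ r - (ρ * M).trace.re := by
    have := htrN.1
    simpa using this
  rw [htrM] at hre
  nlinarith [Real.sq_sqrt hs0, Real.sqrt_nonneg s]
end

section
/- Let A₁, …, A_M be Hermitian d_A×d_A complex matrices with Aᵢ² = 1, and B₁, …, B_M be Hermitian d_B×d_B complex matrices with Bᵢ² = 1. Assume: (i) for every i ≠ j, the pair cut-anticommutes, i.e., Aᵢ*Aⱼ = -(Aⱼ*Aᵢ) or Bᵢ*Bⱼ = -(Bⱼ*Bᵢ); (ii) every pair Aᵢ, Aⱼ either commutes or anticommutes, and every pair Bᵢ, Bⱼ either commutes or anticommutes. Then for every product density matrix ρ = ρ_A ⊗ ρ_B (Kronecker product of a d_A×d_A density matrix ρ_A and a d_B×d_B density matrix ρ_B), one has ∑_{i=1}^M (Re(trace(ρ * (Aᵢ ⊗ Bᵢ))))² ≤ 1. -/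
open Matrix Kronecker
open ComplexOrder

private lemma sum_prod_mul {κ₁ κ₂ : Type*} [Fintype κ₁] [Fintype κ₂] (F : κ₁ → ℝ) (G : κ₂ → ℝ) :
    ∑ p : κ₁ × κ₂, F p.1 * G p.2 = (∑ k, F k) * (∑ k, G k) := by
  rw [Fintype.sum_prod_type, Finset.sum_mul_sum]

private lemma key_bessel {ι κ₁ κ₂ : Type*} [Fintype ι] [Fintype κ₁] [Fintype κ₂]
    (c : κ₁ → ℝ) (d : κ₂ → ℝ) (x : ι → κ₁ → ℝ) (y : ι → κ₂ → ℝ)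
    (hc : ∑ k, c k ^ 2 ≤ 1) (hd : ∑ k, d k ^ 2 ≤ 1)
    (hx : ∀ i, ∑ k, x i k ^ 2 ≤ 1) (hy : ∀ i, ∑ k, y i k ^ 2 ≤ 1)
    (horth : ∀ i j, i ≠ j → (∑ k, x i k * x j k) * (∑ k, y i k * y j k) = 0) :
    ∑ i, ((∑ k, c k * x i k) * (∑ k, d k * y i k)) ^ 2 ≤ 1 := by
  set t : ι → ℝ := fun i => (∑ k, c k * x i k) * (∑ k, d k * y i k) with ht
  set S : ℝ := ∑ i, t i ^ 2 with hS
  have hS0 : 0 ≤ S := Finset.sum_nonneg fun i _ => sq_nonneg _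
  set w : κ₁ × κ₂ → ℝ := fun p => c p.1 * d p.2 with hw
  set z : κ₁ × κ₂ → ℝ := fun p => ∑ i, t i * x i p.1 * y i p.2 with hz
  have hwz : ∑ p, w p * z p = S := by
    calc ∑ p, w p * z p
        = ∑ p : κ₁ × κ₂, ∑ i, ((c p.1 * x i p.1) * (d p.2 * y i p.2)) * t i := by
          refine Finset.sum_congr rfl fun p _ => ?_
          rw [hw, hz, Finset.mul_sum]
          exact Finset.sum_congr rfl fun i _ => by ring
      _ = ∑ i, ∑ p : κ₁ × κ₂, ((c p.1 * x i p.1) * (d p.2 * y i p.2)) * t i :=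
          Finset.sum_comm
      _ = ∑ i, (∑ p : κ₁ × κ₂, (c p.1 * x i p.1) * (d p.2 * y i p.2)) * t i := by
          refine Finset.sum_congr rfl fun i _ => ?_
          rw [Finset.sum_mul]
      _ = S := by
          rw [hS]
          refine Finset.sum_congr rfl fun i _ => ?_
          rw [sum_prod_mul (fun a => c a * x i a) (fun b => d b * y i b)]
          ring
  have hww : ∑ p, w p ^ 2 ≤ 1 := by
    have e : ∑ p, w p ^ 2 = (∑ k, c k ^ 2) * (∑ k, d k ^ 2) := by
      calc ∑ p, w p ^ 2 = ∑ p : κ₁ × κ₂, (c p.1 ^ 2) * (d p.2 ^ 2) :=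
            Finset.sum_congr rfl fun p _ => by rw [hw]; ring
        _ = (∑ k, c k ^ 2) * (∑ k, d k ^ 2) := sum_prod_mul (fun a => c a ^ 2) (fun b => d b ^ 2)
    have h1 : (0:ℝ) ≤ ∑ k, c k ^ 2 := Finset.sum_nonneg fun i _ => sq_nonneg _
    have h2 : (0:ℝ) ≤ ∑ k, d k ^ 2 := Finset.sum_nonneg fun i _ => sq_nonneg _
    rw [e]; nlinarith
  have hzz : ∑ p, z p ^ 2 ≤ S := by
    have expand : ∑ p, z p ^ 2 =
        ∑ i, ∑ j, (t i * t j) * ((∑ k, x i k * x j k) * (∑ k, y i k * y j k)) := by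
      calc ∑ p, z p ^ 2
          = ∑ p : κ₁ × κ₂, ∑ i, ∑ j,
              (t i * t j) * ((x i p.1 * x j p.1) * (y i p.2 * y j p.2)) := by
            refine Finset.sum_congr rfl fun p _ => ?_
            rw [hz, sq, Finset.sum_mul_sum]
            exact Finset.sum_congr rfl fun i _ => Finset.sum_congr rfl fun j _ => by ring
        _ = ∑ i, ∑ p : κ₁ × κ₂, ∑ j,
              (t i * t j) * ((x i p.1 * x j p.1) * (y i p.2 * y j p.2)) := Finset.sum_comm
        _ = ∑ i, ∑ j, ∑ p : κ₁ × κ₂,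
              (t i * t j) * ((x i p.1 * x j p.1) * (y i p.2 * y j p.2)) :=
            Finset.sum_congr rfl fun i _ => Finset.sum_comm
        _ = ∑ i, ∑ j, (t i * t j) * ((∑ k, x i k * x j k) * (∑ k, y i k * y j k)) := by
            refine Finset.sum_congr rfl fun i _ => Finset.sum_congr rfl fun j _ => ?_
            rw [← Finset.mul_sum, sum_prod_mul (fun a => x i a * x j a) (fun b => y i b * y j b)]
    rw [expand]
    have diag : ∀ i : ι, ∑ j, (t i * t j) * ((∑ k, x i k * x j k) * (∑ k, y i k * y j k))
        = (t i * t i) * ((∑ k, x i k * x i k) * (∑ k, y i k * y i k)) := by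
      intro i
      refine Finset.sum_eq_single i (fun j _ hji => ?_) (fun h => absurd (Finset.mem_univ i) h)
      rw [horth i j (Ne.symm hji), mul_zero]
    calc ∑ i, ∑ j, (t i * t j) * ((∑ k, x i k * x j k) * (∑ k, y i k * y j k))
        = ∑ i, (t i * t i) * ((∑ k, x i k * x i k) * (∑ k, y i k * y i k)) :=
          Finset.sum_congr rfl fun i _ => diag i
      _ ≤ ∑ i, t i ^ 2 := by
          refine Finset.sum_le_sum fun i _ => ?_
          have hx1 : ∑ k, x i k * x i k ≤ 1 := by
            simpa [sq] using hx i
          have hx0 : (0:ℝ) ≤ ∑ k, x i k * x i k :=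
            Finset.sum_nonneg fun k _ => mul_self_nonneg _
          have hy1 : ∑ k, y i k * y i k ≤ 1 := by
            simpa [sq] using hy i
          have hy0 : (0:ℝ) ≤ ∑ k, y i k * y i k :=
            Finset.sum_nonneg fun k _ => mul_self_nonneg _
          have hxy1 : (∑ k, x i k * x i k) * (∑ k, y i k * y i k) ≤ 1 :=
            mul_le_one₀ hx1 hy0 hy1
          have hxy0 : (0:ℝ) ≤ (∑ k, x i k * x i k) * (∑ k, y i k * y i k) :=
            mul_nonneg hx0 hy0
          nlinarith [sq_nonneg (t i)]
  have cs := Finset.sum_mul_sq_le_sq_mul_sq Finset.univ w z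
  rw [hwz] at cs
  have hz0 : (0:ℝ) ≤ ∑ p, z p ^ 2 := Finset.sum_nonneg fun p _ => sq_nonneg _
  have chain : S ^ 2 ≤ S := le_trans cs (by
    calc (∑ p, w p ^ 2) * ∑ p, z p ^ 2 ≤ 1 * S := mul_le_mul hww hzz hz0 zero_le_one
      _ = S := one_mul S)
  nlinarith

private noncomputable def reify {n : ℕ} (X : Matrix (Fin n) (Fin n) ℂ) :
    (Fin n × Fin n) × Bool → ℝ :=
  fun p => if p.2 then (X p.1.1 p.1.2).im else (X p.1.1 p.1.2).re

private lemma reify_dot {n : ℕ} (X Y : Matrix (Fin n) (Fin n) ℂ) :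
    ∑ k, reify X k * reify Y k = ((Xᴴ * Y).trace).re := by
  rw [Matrix.trace]
  simp only [Matrix.diag, Matrix.mul_apply, Matrix.conjTranspose_apply, Finset.sum_apply,
    Complex.re_sum, Complex.mul_re, Complex.conj_re, Complex.conj_im, reify,
    Fintype.sum_prod_type, Fintype.sum_bool]
  rw [Finset.sum_comm]
  apply Finset.sum_congr rfl; intro a _
  apply Finset.sum_congr rfl; intro b _
  simp only [if_true, Bool.false_eq_true, if_false, RCLike.star_def, Complex.conj_re,
    Complex.conj_im]
  ring

private lemma trace_herm_im {n : ℕ} {ρ G : Matrix (Fin n) (Fin n) ℂ}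
    (hρ : ρ.IsHermitian) (hG : G.IsHermitian) : ((ρ * G).trace).im = 0 := by
  have h : star ((ρ * G).trace) = (ρ * G).trace := by
    rw [← Matrix.trace_conjTranspose, Matrix.conjTranspose_mul, hρ.eq, hG.eq,
      Matrix.trace_mul_comm]
  exact Complex.conj_eq_iff_im.mp h

private lemma trace_anti_re {n : ℕ} {ρ N : Matrix (Fin n) (Fin n) ℂ}
    (hρ : ρ.IsHermitian) (hN : Nᴴ = -N) : ((ρ * N).trace).re = 0 := by
  have h : star ((ρ * N).trace) = -((ρ * N).trace) := by
    rw [← Matrix.trace_conjTranspose, Matrix.conjTranspose_mul, hN, hρ.eq,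
      Matrix.neg_mul, Matrix.trace_neg, Matrix.trace_mul_comm]
  have h2 := congrArg Complex.re h
  simp only [Complex.star_def, Complex.conj_re, Complex.neg_re] at h2
  linarith

section sqrtPort
open scoped MatrixOrder

noncomputable def Matrix.PosSemidef.sqrt {n : ℕ} {ρ : Matrix (Fin n) (Fin n) ℂ}
    (_hρ : ρ.PosSemidef) : Matrix (Fin n) (Fin n) ℂ := CFC.sqrt ρ

lemma Matrix.PosSemidef.posSemidef_sqrt {n : ℕ} {ρ : Matrix (Fin n) (Fin n) ℂ}
    (hρ : ρ.PosSemidef) : hρ.sqrt.PosSemidef := (CFC.sqrt_nonneg ρ).posSemidef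

lemma Matrix.PosSemidef.sqrt_mul_self {n : ℕ} {ρ : Matrix (Fin n) (Fin n) ℂ}
    (hρ : ρ.PosSemidef) : hρ.sqrt * hρ.sqrt = ρ := CFC.sqrt_mul_sqrt_self ρ hρ.nonneg

end sqrtPort

private lemma sqrt_trace_eq {n : ℕ} {ρ : Matrix (Fin n) (Fin n) ℂ} (hρ : ρ.PosSemidef)
    (G G' : Matrix (Fin n) (Fin n) ℂ) :
    ((G * hρ.sqrt)ᴴ * (G' * hρ.sqrt)).trace = (ρ * (Gᴴ * G')).trace := by
  have hs : hρ.sqrtᴴ = hρ.sqrt := hρ.posSemidef_sqrt.1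
  rw [Matrix.conjTranspose_mul, hs,
    show hρ.sqrt * Gᴴ * (G' * hρ.sqrt) = (hρ.sqrt * (Gᴴ * G')) * hρ.sqrt by
      simp only [mul_assoc],
    Matrix.trace_mul_comm, ← mul_assoc, hρ.sqrt_mul_self]

private lemma sqrt_trace_eq_one {n : ℕ} {ρ : Matrix (Fin n) (Fin n) ℂ} (hρ : ρ.PosSemidef)
    (G' : Matrix (Fin n) (Fin n) ℂ) :
    (hρ.sqrtᴴ * (G' * hρ.sqrt)).trace = (ρ * G').trace := by
  have := sqrt_trace_eq hρ 1 G'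
  simpa using this

/-- For cut-anticommuting Hermitian involutions `Aᵢ ⊗ Bᵢ` whose factors pairwise commute
or anticommute, any product state `ρ_A ⊗ ρ_B` satisfies `∑ ⟨Aᵢ⊗Bᵢ⟩² ≤ 1`. -/
theorem product_state_sum_sq_le_one {dA dB M : ℕ}
    (A : Fin M → Matrix (Fin dA) (Fin dA) ℂ)
    (B : Fin M → Matrix (Fin dB) (Fin dB) ℂ)
    (hAherm : ∀ i, (A i).IsHermitian) (hBherm : ∀ i, (B i).IsHermitian)
    (hAsq : ∀ i, A i * A i = 1) (hBsq : ∀ i, B i * B i = 1)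
    (hcut : ∀ i j, i ≠ j →
      (A i * A j = -(A j * A i)) ∨ (B i * B j = -(B j * B i)))
    (hAcomm : ∀ i j, A i * A j = A j * A i ∨ A i * A j = -(A j * A i))
    (hBcomm : ∀ i j, B i * B j = B j * B i ∨ B i * B j = -(B j * B i))
    (ρA : Matrix (Fin dA) (Fin dA) ℂ) (ρB : Matrix (Fin dB) (Fin dB) ℂ)
    (hρA : IsDensityMatrix ρA) (hρB : IsDensityMatrix ρB) :
    ∑ i, (((ρA ⊗ₖ ρB) * (A i ⊗ₖ B i)).trace.re) ^ 2 ≤ 1 := by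
  obtain ⟨hρAp, hρAt⟩ := hρA
  obtain ⟨hρBp, hρBt⟩ := hρB
  set σA := hρAp.sqrt with hσA
  set σB := hρBp.sqrt with hσB
  set c : (Fin dA × Fin dA) × Bool → ℝ := reify σA with hc'
  set d : (Fin dB × Fin dB) × Bool → ℝ := reify σB with hd'
  set x : Fin M → (Fin dA × Fin dA) × Bool → ℝ := fun i => reify (A i * σA) with hx'
  set y : Fin M → (Fin dB × Fin dB) × Bool → ℝ := fun i => reify (B i * σB) with hy'
  -- basic dot products
  have hcx : ∀ i, ∑ k, c k * x i k = ((ρA * A i).trace).re := by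
    intro i
    rw [hc', hx', reify_dot, sqrt_trace_eq_one hρAp (A i)]
  have hdy : ∀ i, ∑ k, d k * y i k = ((ρB * B i).trace).re := by
    intro i
    rw [hd', hy', reify_dot, sqrt_trace_eq_one hρBp (B i)]
  have hcc : ∑ k, c k ^ 2 ≤ 1 := by
    have e : ∑ k, c k ^ 2 = ∑ k, c k * c k := by simp [sq]
    rw [e, hc', reify_dot, hρAp.posSemidef_sqrt.1, hρAp.sqrt_mul_self, hρAt]
    simp
  have hdd : ∑ k, d k ^ 2 ≤ 1 := by
    have e : ∑ k, d k ^ 2 = ∑ k, d k * d k := by simp [sq]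
    rw [e, hd', reify_dot, hρBp.posSemidef_sqrt.1, hρBp.sqrt_mul_self, hρBt]
    simp
  have hxx : ∀ i, ∑ k, x i k ^ 2 ≤ 1 := by
    intro i
    have e : ∑ k, x i k ^ 2 = ∑ k, x i k * x i k := by simp [sq]
    rw [e, hx', reify_dot, sqrt_trace_eq hρAp (A i) (A i), (hAherm i).eq, hAsq i, mul_one, hρAt]
    simp
  have hyy : ∀ i, ∑ k, y i k ^ 2 ≤ 1 := by
    intro i
    have e : ∑ k, y i k ^ 2 = ∑ k, y i k * y i k := by simp [sq]
    rw [e, hy', reify_dot, sqrt_trace_eq hρBp (B i) (B i), (hBherm i).eq, hBsq i, mul_one, hρBt]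
    simp
  have horth : ∀ i j, i ≠ j → (∑ k, x i k * x j k) * (∑ k, y i k * y j k) = 0 := by
    intro i j hij
    rcases hcut i j hij with h | h
    · refine mul_eq_zero_of_left ?_ _
      rw [hx', reify_dot, sqrt_trace_eq hρAp (A i) (A j), (hAherm i).eq]
      refine trace_anti_re hρAp.1 ?_
      rw [Matrix.conjTranspose_mul, (hAherm i).eq, (hAherm j).eq, h, neg_neg]
    · refine mul_eq_zero_of_right _ ?_
      rw [hy', reify_dot, sqrt_trace_eq hρBp (B i) (B j), (hBherm i).eq]
      refine trace_anti_re hρBp.1 ?_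
      rw [Matrix.conjTranspose_mul, (hBherm i).eq, (hBherm j).eq, h, neg_neg]
  have main_eq : ∀ i, ((ρA ⊗ₖ ρB) * (A i ⊗ₖ B i)).trace.re
      = (∑ k, c k * x i k) * (∑ k, d k * y i k) := by
    intro i
    rw [← Matrix.mul_kronecker_mul, Matrix.trace_kronecker, hcx i, hdy i, Complex.mul_re,
      trace_herm_im hρAp.1 (hAherm i), trace_herm_im hρBp.1 (hBherm i), mul_zero, sub_zero]
  calc ∑ i, (((ρA ⊗ₖ ρB) * (A i ⊗ₖ B i)).trace.re) ^ 2
      = ∑ i, ((∑ k, c k * x i k) * (∑ k, d k * y i k)) ^ 2 :=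
        Finset.sum_congr rfl fun i _ => by rw [main_eq i]
    _ ≤ 1 := key_bessel c d x y hcc hdd hxx hyy horth
end

section
/- Let A₁, …, A_M be Hermitian d_A×d_A complex matrices with Aᵢ² = 1, and B₁, …, B_M be Hermitian d_B×d_B complex matrices with Bᵢ² = 1, such that for every i ≠ j the pair (A|B)-anticommutes (Aᵢ*Aⱼ = -(Aⱼ*Aᵢ) or Bᵢ*Bⱼ = -(Bⱼ*Bᵢ)), and every pair Aᵢ, Aⱼ and every pair Bᵢ, Bⱼ either commutes or anticommutes. Then for every separable state with respect to the cut A|B — i.e., every ρ of the form ρ = ∑_k p_k • (ρ_A^{(k)} ⊗ ρ_B^{(k)}) with p_k ≥ 0, ∑_k p_k = 1, and each ρ_A^{(k)}, ρ_B^{(k)} a density matrix — one has ∑_{i=1}^M (Re(trace(ρ * (Aᵢ ⊗ Bᵢ))))² ≤ 1. -/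
open Matrix Kronecker
open ComplexOrder

-- trace of σ * Xᴴ * X has nonneg real part when σ PSD
lemma trace_psd_re_nonneg {d : ℕ} {σ : Matrix (Fin d) (Fin d) ℂ} (hσ : σ.PosSemidef)
    (S : Matrix (Fin d) (Fin d) ℂ) : 0 ≤ ((σ * (Sᴴ * S)).trace).re := by
  obtain ⟨C, rfl⟩ : ∃ C : Matrix (Fin d) (Fin d) ℂ, σ = Cᴴ * C := by
    classical
    open scoped MatrixOrder in exact CStarAlgebra.nonneg_iff_eq_star_mul_self.mp hσ.nonneg
  have h1 : (Cᴴ * C * (Sᴴ * S)).trace = ((S * Cᴴ)ᴴ * (S * Cᴴ)).trace := by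
    rw [conjTranspose_mul, conjTranspose_conjTranspose]
    rw [show C * Sᴴ * (S * Cᴴ) = C * (Sᴴ * S) * Cᴴ by
      simp only [Matrix.mul_assoc]]
    rw [Matrix.trace_mul_cycle C (Sᴴ * S) Cᴴ, ← Matrix.mul_assoc, Matrix.trace_mul_comm]
  rw [h1]
  set X := S * Cᴴ
  have h2 : (Xᴴ * X).trace = ∑ j, ∑ k, (starRingEnd ℂ) (X k j) * X k j := by
    simp [Matrix.trace, Matrix.diag, Matrix.mul_apply, Matrix.conjTranspose_apply]
  rw [h2, Complex.re_sum]
  refine Finset.sum_nonneg fun j _ => ?_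
  rw [Complex.re_sum]
  refine Finset.sum_nonneg fun k _ => ?_
  simp [Complex.mul_re]
  nlinarith [sq_nonneg (X k j).re, sq_nonneg (X k j).im]


-- trace of product of two hermitian matrices is real
lemma herm_trace_star {d : ℕ} {X Y : Matrix (Fin d) (Fin d) ℂ}
    (hX : X.IsHermitian) (hY : Y.IsHermitian) :
    (starRingEnd ℂ) ((X * Y).trace) = (X * Y).trace := by
  have : ((X * Y)ᴴ).trace = star ((X * Y).trace) := Matrix.trace_conjTranspose _
  rw [Matrix.conjTranspose_mul, hX.eq, hY.eq, Matrix.trace_mul_comm] at this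
  exact this.symm

lemma herm_trace_re {d : ℕ} {X Y : Matrix (Fin d) (Fin d) ℂ}
    (hX : X.IsHermitian) (hY : Y.IsHermitian) :
    ((X * Y).trace : ℂ) = (((X * Y).trace).re : ℝ) := by
  have := herm_trace_star hX hY
  exact ((Complex.conj_eq_iff_re).mp this).symm

-- Re trace(σ * (Aᵢ * Aⱼ)) = 0 when σ hermitian and Aᵢ Aⱼ hermitian anticommuting
lemma anticomm_trace_re_zero {d : ℕ} {σ X Y : Matrix (Fin d) (Fin d) ℂ}
    (hσ : σ.IsHermitian) (hX : X.IsHermitian) (hY : Y.IsHermitian)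
    (h : X * Y = -(Y * X)) : ((σ * (X * Y)).trace).re = 0 := by
  have h1 : (starRingEnd ℂ) ((σ * (X * Y)).trace) = -((σ * (X * Y)).trace) := by
    have : ((σ * (X * Y))ᴴ).trace = star ((σ * (X * Y)).trace) :=
      Matrix.trace_conjTranspose _
    rw [Matrix.conjTranspose_mul, Matrix.conjTranspose_mul, hX.eq, hY.eq, hσ.eq] at this
    rw [Matrix.trace_mul_comm] at this
    have hYX : Y * X = -(X * Y) := by rw [h]; simp
    rw [show (starRingEnd ℂ) ((σ * (X * Y)).trace) = star ((σ * (X * Y)).trace) from rfl,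
      ← this, hYX]
    simp [Matrix.mul_neg]
  have := congrArg Complex.re h1
  simp at this
  linarith

lemma gram_posSemidef {d : ℕ} {ι : Type*} [Fintype ι] [DecidableEq ι]
    {σ : Matrix (Fin d) (Fin d) ℂ} (hσ : σ.PosSemidef)
    (F : ι → Matrix (Fin d) (Fin d) ℂ) :
    (Matrix.of fun s t => ((σ * ((F s)ᴴ * F t)).trace).re).PosSemidef := by
  refine Matrix.PosSemidef.of_dotProduct_mulVec_nonneg ?_ ?_
  · ext s t
    simp only [Matrix.conjTranspose_apply, Matrix.of_apply, star_trivial]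
    have h1 : ((σ * ((F t)ᴴ * F s))ᴴ).trace = star ((σ * ((F t)ᴴ * F s)).trace) :=
      Matrix.trace_conjTranspose _
    rw [Matrix.conjTranspose_mul, Matrix.conjTranspose_mul, Matrix.conjTranspose_conjTranspose,
      hσ.1.eq, Matrix.trace_mul_comm] at h1
    have := congrArg Complex.re h1
    simpa [Complex.conj_re] using this.symm
  · intro x
    set S : Matrix (Fin d) (Fin d) ℂ := ∑ t, (x t : ℂ) • F t with hSdef
    have key : σ * (Sᴴ * S) = ∑ s, ∑ t, ((x s : ℂ) * (x t : ℂ)) • (σ * ((F s)ᴴ * F t)) := by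
      rw [hSdef, Matrix.conjTranspose_sum]
      simp only [Matrix.conjTranspose_smul, Complex.star_def, Complex.conj_ofReal,
        Finset.sum_mul, Finset.mul_sum, Matrix.smul_mul, Matrix.mul_smul, smul_smul,
        Matrix.mul_assoc]
      rw [Finset.sum_comm]
      simp_rw [mul_comm]
    have tr_eq : ((σ * (Sᴴ * S)).trace).re
        = ∑ s, ∑ t, x s * x t * ((σ * ((F s)ᴴ * F t)).trace).re := by
      rw [key, Matrix.trace_sum, Complex.re_sum]
      refine Finset.sum_congr rfl fun s _ => ?_
      rw [Matrix.trace_sum, Complex.re_sum]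
      refine Finset.sum_congr rfl fun t _ => ?_
      rw [Matrix.trace_smul]
      push_cast
      simp [Complex.mul_re]
    have hnn := trace_psd_re_nonneg hσ S
    rw [tr_eq] at hnn
    simpa [dotProduct, Matrix.mulVec, Finset.mul_sum, mul_assoc, mul_comm, mul_left_comm] using hnn

lemma quadform_nonneg {ι : Type} [Fintype ι] {Y : Matrix ι ι ℝ} (hY : Y.PosSemidef)
    (v : ι → ℝ) : 0 ≤ ∑ s, ∑ t, v s * v t * Y s t := by
  have := hY.dotProduct_mulVec_nonneg v
  simpa [dotProduct, Matrix.mulVec, Finset.mul_sum, mul_assoc, mul_comm,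
    mul_left_comm] using this

lemma key_product {dA dB M : ℕ}
    (A : Fin M → Matrix (Fin dA) (Fin dA) ℂ)
    (B : Fin M → Matrix (Fin dB) (Fin dB) ℂ)
    (hAherm : ∀ i, (A i).IsHermitian) (hBherm : ∀ i, (B i).IsHermitian)
    (hAsq : ∀ i, A i * A i = 1) (hBsq : ∀ i, B i * B i = 1)
    (hcut : ∀ i j, i ≠ j →
      (A i * A j = -(A j * A i)) ∨ (B i * B j = -(B j * B i)))
    {σA : Matrix (Fin dA) (Fin dA) ℂ} {σB : Matrix (Fin dB) (Fin dB) ℂ}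
    (hσA : σA.PosSemidef) (htA : σA.trace = 1)
    (hσB : σB.PosSemidef) (htB : σB.trace = 1) :
    ∑ i, (((σA * A i).trace).re * ((σB * B i).trace).re) ^ 2 ≤ 1 := by
  set a : Fin M → ℝ := fun i => ((σA * A i).trace).re with ha
  set b : Fin M → ℝ := fun i => ((σB * B i).trace).re with hb
  set F : Option (Fin M) → Matrix (Fin dA) (Fin dA) ℂ :=
    fun s => s.elim 1 (fun i => (a i : ℂ) • A i) with hF
  set G : Option (Fin M) → Matrix (Fin dB) (Fin dB) ℂ :=
    fun s => s.elim 1 (fun i => (b i : ℂ) • B i) with hG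
  set Y : Matrix (Option (Fin M)) (Option (Fin M)) ℝ :=
    Matrix.of fun s t => ((σA * ((F s)ᴴ * F t)).trace).re with hY
  set Z : Matrix (Option (Fin M)) (Option (Fin M)) ℝ :=
    Matrix.of fun s t => ((σB * ((G s)ᴴ * G t)).trace).re with hZ
  have hYpsd : Y.PosSemidef := gram_posSemidef hσA F
  have hZpsd : Z.PosSemidef := gram_posSemidef hσB G
  -- trace reality facts
  have htrA : ∀ i, (σA * A i).trace = ((a i : ℝ) : ℂ) := fun i =>
    (Complex.conj_eq_iff_re.mp (herm_trace_star hσA.1 (hAherm i))).symm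
  have htrB : ∀ i, (σB * B i).trace = ((b i : ℝ) : ℂ) := fun i =>
    (Complex.conj_eq_iff_re.mp (herm_trace_star hσB.1 (hBherm i))).symm
  -- entries of Y
  have hermF : ∀ i, ((a i : ℂ) • A i)ᴴ = (a i : ℂ) • A i := by
    intro i
    rw [Matrix.conjTranspose_smul, (hAherm i).eq, Complex.star_def, Complex.conj_ofReal]
  have hermG : ∀ i, ((b i : ℂ) • B i)ᴴ = (b i : ℂ) • B i := by
    intro i
    rw [Matrix.conjTranspose_smul, (hBherm i).eq, Complex.star_def, Complex.conj_ofReal]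
  have eY00 : Y none none = 1 := by
    simp [hY, hF, htA]
  have eY0 : ∀ i, Y none (some i) = a i ^ 2 := by
    intro i
    simp only [hY, hF, Matrix.of_apply, Option.elim, Matrix.conjTranspose_one, Matrix.one_mul,
      Matrix.mul_smul, Matrix.trace_smul]
    rw [htrA i]
    push_cast
    simp [pow_two]
  have eY0' : ∀ i, Y (some i) none = a i ^ 2 := by
    intro i
    simp only [hY, hF, Matrix.of_apply, Option.elim]
    rw [hermF i]
    simp only [Matrix.mul_one, Matrix.mul_smul, Matrix.trace_smul]
    rw [htrA i]
    push_cast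
    simp [pow_two]
  have eYd : ∀ i, Y (some i) (some i) = a i ^ 2 := by
    intro i
    simp only [hY, hF, Matrix.of_apply, Option.elim]
    rw [hermF i]
    have hmm : ((a i : ℂ) • A i) * ((a i : ℂ) • A i)
        = ((a i : ℂ) * (a i : ℂ)) • (1 : Matrix (Fin dA) (Fin dA) ℂ) := by
      rw [smul_mul_smul_comm, hAsq i]
    rw [hmm, Matrix.mul_smul, Matrix.mul_one, Matrix.trace_smul, htA]
    push_cast
    simp [pow_two, Complex.mul_re]
  have eZ00 : Z none none = 1 := by
    simp [hZ, hG, htB]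
  have eZ0 : ∀ i, Z none (some i) = b i ^ 2 := by
    intro i
    simp only [hZ, hG, Matrix.of_apply, Option.elim, Matrix.conjTranspose_one, Matrix.one_mul,
      Matrix.mul_smul, Matrix.trace_smul]
    rw [htrB i]
    push_cast
    simp [pow_two]
  have eZ0' : ∀ i, Z (some i) none = b i ^ 2 := by
    intro i
    simp only [hZ, hG, Matrix.of_apply, Option.elim]
    rw [hermG i]
    simp only [Matrix.mul_one, Matrix.mul_smul, Matrix.trace_smul]
    rw [htrB i]
    push_cast
    simp [pow_two]
  have eZd : ∀ i, Z (some i) (some i) = b i ^ 2 := by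
    intro i
    simp only [hZ, hG, Matrix.of_apply, Option.elim]
    rw [hermG i]
    have hmm : ((b i : ℂ) • B i) * ((b i : ℂ) • B i)
        = ((b i : ℂ) * (b i : ℂ)) • (1 : Matrix (Fin dB) (Fin dB) ℂ) := by
      rw [smul_mul_smul_comm, hBsq i]
    rw [hmm, Matrix.mul_smul, Matrix.mul_one, Matrix.trace_smul, htB]
    push_cast
    simp [pow_two, Complex.mul_re]
  -- off-diagonal vanishing
  have eoff : ∀ i j, i ≠ j → Y (some i) (some j) * Z (some i) (some j) = 0 := by
    intro i j hij
    rcases hcut i j hij with h | h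
    · have : Y (some i) (some j) = 0 := by
        simp only [hY, hF, Matrix.of_apply, Option.elim]
        rw [hermF i, show ((a i : ℂ) • A i) * ((a j : ℂ) • A j)
          = ((a i : ℂ) * (a j : ℂ)) • (A i * A j) from smul_mul_smul_comm _ _ _ _,
          Matrix.mul_smul, Matrix.trace_smul]
        have h0 := anticomm_trace_re_zero hσA.1 (hAherm i) (hAherm j) h
        push_cast
        simp [Complex.mul_re, h0]
      rw [this, zero_mul]
    · have : Z (some i) (some j) = 0 := by
        simp only [hZ, hG, Matrix.of_apply, Option.elim]
        rw [hermG i, show ((b i : ℂ) • B i) * ((b j : ℂ) • B j)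
          = ((b i : ℂ) * (b j : ℂ)) • (B i * B j) from smul_mul_smul_comm _ _ _ _,
          Matrix.mul_smul, Matrix.trace_smul]
        have h0 := anticomm_trace_re_zero hσB.1 (hBherm i) (hBherm j) h
        push_cast
        simp [Complex.mul_re, h0]
      rw [this, mul_zero]
  -- the test vector
  set x : Option (Fin M) → ℝ := fun s => s.elim (-1) (fun _ => 1) with hx
  obtain ⟨N, hN⟩ : ∃ N : Matrix (Option (Fin M)) (Option (Fin M)) ℝ, Z = Nᴴ * N := by
    classical
    open scoped MatrixOrder in exact CStarAlgebra.nonneg_iff_eq_star_mul_self.mp hZpsd.nonneg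
  have hZentry : ∀ s t, Z s t = ∑ k, N k s * N k t := by
    intro s t
    rw [hN]
    simp [Matrix.mul_apply, Matrix.conjTranspose_apply]
  have hQ : 0 ≤ ∑ s, ∑ t, x s * x t * (Y s t * Z s t) := by
    have heq : (∑ s, ∑ t, x s * x t * (Y s t * Z s t))
        = ∑ k, ∑ s, ∑ t, (x s * N k s) * (x t * N k t) * Y s t := by
      simp_rw [hZentry, Finset.mul_sum]
      have h1 : (∑ s, ∑ t, ∑ k, x s * x t * (Y s t * (N k s * N k t)))
          = ∑ s, ∑ k, ∑ t, x s * x t * (Y s t * (N k s * N k t)) :=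
        Finset.sum_congr rfl (fun s _ => Finset.sum_comm)
      rw [h1, Finset.sum_comm]
      refine Finset.sum_congr rfl fun k _ => ?_
      refine Finset.sum_congr rfl fun s _ => ?_
      refine Finset.sum_congr rfl fun t _ => ?_
      ring
    rw [heq]
    exact Finset.sum_nonneg fun k _ => quadform_nonneg hYpsd _
  have hQval : (∑ s, ∑ t, x s * x t * (Y s t * Z s t)) = 1 - ∑ i, (a i * b i) ^ 2 := by
    rw [Fintype.sum_option]
    rw [Fintype.sum_option]
    have hrest : ∀ i : Fin M, (∑ t, x (some i) * x t * (Y (some i) t * Z (some i) t))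
        = -(a i ^ 2 * b i ^ 2) + a i ^ 2 * b i ^ 2 := by
      intro i
      rw [Fintype.sum_option]
      congr 1
      · simp [hx, eY0' i, eZ0' i]
      · rw [Fintype.sum_eq_single i (fun j hj => by rw [eoff i j (Ne.symm hj)]; ring)]
        simp [hx, eYd i, eZd i]
    simp_rw [hrest]
    simp [hx, eY00, eZ00, eY0, eZ0, Finset.mul_sum]
    ring_nf
  have := hQ
  rw [hQval] at this
  linarith

/-- For cut-anticommuting Hermitian involutions `Aᵢ ⊗ Bᵢ` whose factors pairwise commute
or anticommute, any state separable with respect to the cut `A|B` satisfies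
`∑ ⟨Aᵢ⊗Bᵢ⟩² ≤ 1`. -/
theorem separable_state_sum_sq_le_one {dA dB M K : ℕ}
    (A : Fin M → Matrix (Fin dA) (Fin dA) ℂ)
    (B : Fin M → Matrix (Fin dB) (Fin dB) ℂ)
    (hAherm : ∀ i, (A i).IsHermitian) (hBherm : ∀ i, (B i).IsHermitian)
    (hAsq : ∀ i, A i * A i = 1) (hBsq : ∀ i, B i * B i = 1)
    (hcut : ∀ i j, i ≠ j →
      (A i * A j = -(A j * A i)) ∨ (B i * B j = -(B j * B i)))
    (hAcomm : ∀ i j, A i * A j = A j * A i ∨ A i * A j = -(A j * A i))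
    (hBcomm : ∀ i j, B i * B j = B j * B i ∨ B i * B j = -(B j * B i))
    (p : Fin K → ℝ) (hp : ∀ k, 0 ≤ p k) (hp1 : ∑ k, p k = 1)
    (ρA : Fin K → Matrix (Fin dA) (Fin dA) ℂ)
    (ρB : Fin K → Matrix (Fin dB) (Fin dB) ℂ)
    (hρA : ∀ k, IsDensityMatrix (ρA k)) (hρB : ∀ k, IsDensityMatrix (ρB k))
    (ρ : Matrix (Fin dA × Fin dB) (Fin dA × Fin dB) ℂ)
    (hρ : ρ = ∑ k, (p k : ℂ) • (ρA k ⊗ₖ ρB k)) :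
    ∑ i, ((ρ * (A i ⊗ₖ B i)).trace.re) ^ 2 ≤ 1 := by
  set a : Fin M → Fin K → ℝ := fun i k => ((ρA k * A i).trace).re with ha
  set b : Fin M → Fin K → ℝ := fun i k => ((ρB k * B i).trace).re with hb
  have htrA : ∀ i k, (ρA k * A i).trace = ((a i k : ℝ) : ℂ) := fun i k =>
    (Complex.conj_eq_iff_re.mp (herm_trace_star (hρA k).1.1 (hAherm i))).symm
  have htrB : ∀ i k, (ρB k * B i).trace = ((b i k : ℝ) : ℂ) := fun i k =>
    (Complex.conj_eq_iff_re.mp (herm_trace_star (hρB k).1.1 (hBherm i))).symm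
  have htr : ∀ i, ((ρ * (A i ⊗ₖ B i)).trace).re = ∑ k, p k * (a i k * b i k) := by
    intro i
    rw [hρ, Finset.sum_mul, Matrix.trace_sum]
    rw [Complex.re_sum]
    refine Finset.sum_congr rfl fun k _ => ?_
    rw [Matrix.smul_mul, Matrix.trace_smul, ← Matrix.mul_kronecker_mul,
      Matrix.trace_kronecker, htrA i k, htrB i k]
    push_cast
    simp [Complex.mul_re]
  simp_rw [htr]
  -- Cauchy-Schwarz in k for each i
  have hCS : ∀ i, (∑ k, p k * (a i k * b i k)) ^ 2 ≤ ∑ k, p k * (a i k * b i k) ^ 2 := by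
    intro i
    have h := Finset.sum_mul_sq_le_sq_mul_sq Finset.univ
      (fun k => Real.sqrt (p k)) (fun k => Real.sqrt (p k) * (a i k * b i k))
    have h1 : ∀ k : Fin K, Real.sqrt (p k) * (Real.sqrt (p k) * (a i k * b i k))
        = p k * (a i k * b i k) := by
      intro k
      rw [← mul_assoc, Real.mul_self_sqrt (hp k)]
    have h2 : ∀ k : Fin K, Real.sqrt (p k) ^ 2 = p k := fun k => Real.sq_sqrt (hp k)
    have h3 : ∀ k : Fin K, (Real.sqrt (p k) * (a i k * b i k)) ^ 2
        = p k * (a i k * b i k) ^ 2 := by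
      intro k
      rw [mul_pow, h2]
    simp_rw [h1, h2, h3] at h
    rwa [hp1, one_mul] at h
  calc ∑ i, (∑ k, p k * (a i k * b i k)) ^ 2
      ≤ ∑ i, ∑ k, p k * (a i k * b i k) ^ 2 :=
        Finset.sum_le_sum fun i _ => hCS i
    _ = ∑ k, p k * ∑ i, (a i k * b i k) ^ 2 := by
        rw [Finset.sum_comm]
        exact Finset.sum_congr rfl fun k _ => by rw [Finset.mul_sum]
    _ ≤ ∑ k, p k * 1 := by
        refine Finset.sum_le_sum fun k _ => ?_
        refine mul_le_mul_of_nonneg_left ?_ (hp k)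
        exact key_product A B hAherm hBherm hAsq hBsq hcut
          (hρA k).1 (hρA k).2 (hρB k).1 (hρB k).2
    _ = 1 := by simp [hp1]
end

section
/- Let A₁, …, Aₙ be Hermitian d_A×d_A complex matrices with Aᵢ² = 1 and B₁, …, Bₙ be Hermitian d_B×d_B complex matrices with Bᵢ² = 1, such that every pair Aᵢ, Aⱼ either commutes or anticommutes, and every pair Bᵢ, Bⱼ either commutes or anticommutes. Suppose there exist nonzero vectors ψ_A ∈ ℂ^{d_A} and ψ_B ∈ ℂ^{d_B} such that for each i the product vector ψ_A ⊗ ψ_B is an eigenvector of Aᵢ ⊗ Bᵢ with eigenvalue λᵢ ∈ {1, -1}. Then all the operators (A|B)-commute: for all i, j, Aᵢ*Aⱼ = Aⱼ*Aᵢ and Bᵢ*Bⱼ = Bⱼ*Bᵢ. -/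
open Matrix Kronecker

lemma kron_mulVec' {dA dB : ℕ} (M : Matrix (Fin dA) (Fin dA) ℂ)
    (N : Matrix (Fin dB) (Fin dB) ℂ) (x : Fin dA → ℂ) (y : Fin dB → ℂ) :
    (M ⊗ₖ N) *ᵥ (fun p : Fin dA × Fin dB => x p.1 * y p.2) =
      fun p : Fin dA × Fin dB => (M *ᵥ x) p.1 * (N *ᵥ y) p.2 := by
  funext p
  simp only [mulVec, dotProduct, kroneckerMap_apply, Fintype.sum_prod_type,
    Finset.sum_mul, Finset.mul_sum]
  rw [Finset.sum_comm]
  refine Finset.sum_congr rfl fun a _ => Finset.sum_congr rfl fun b _ => by ring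

/-- If a product equation u a * v b = c * (x a * y b) holds with c ≠ 0 and x a0, y b0 ≠ 0,
then u, v are nonzero multiples of x, y. -/
lemma prod_eig {dA dB : ℕ} {u x : Fin dA → ℂ} {v y : Fin dB → ℂ} {c : ℂ}
    (hc : c ≠ 0) {a0 : Fin dA} {b0 : Fin dB} (hx : x a0 ≠ 0) (hy : y b0 ≠ 0)
    (h : ∀ a b, u a * v b = c * (x a * y b)) :
    ∃ μ ν : ℂ, μ ≠ 0 ∧ ν ≠ 0 ∧ u = μ • x ∧ v = ν • y := by
  have h0 : u a0 * v b0 ≠ 0 := by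
    rw [h a0 b0]; exact mul_ne_zero hc (mul_ne_zero hx hy)
  have hu0 : u a0 ≠ 0 := fun h' => h0 (by rw [h', zero_mul])
  have hv0 : v b0 ≠ 0 := fun h' => h0 (by rw [h', mul_zero])
  refine ⟨u a0 / x a0, v b0 / y b0, div_ne_zero hu0 hx, div_ne_zero hv0 hy, ?_, ?_⟩
  · funext a
    have h1 := h a b0
    have h2 := h a0 b0
    have key : u a * x a0 = u a0 * x a := by
      refine mul_right_cancel₀ hv0 ?_
      linear_combination x a0 * h1 - x a * h2
    simp only [Pi.smul_apply, smul_eq_mul, div_mul_eq_mul_div, eq_div_iff hx]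
    linear_combination key
  · funext b
    have h1 := h a0 b
    have h2 := h a0 b0
    have key : v b * y b0 = v b0 * y b := by
      refine mul_left_cancel₀ hu0 ?_
      linear_combination y b0 * h1 - y b * h2
    simp only [Pi.smul_apply, smul_eq_mul, div_mul_eq_mul_div, eq_div_iff hy]
    linear_combination key

lemma comm_of_eig {d : ℕ} {M N : Matrix (Fin d) (Fin d) ℂ} {x : Fin d → ℂ}
    {μ ν : ℂ} (hμ : μ ≠ 0) (hν : ν ≠ 0) {a0 : Fin d} (hx : x a0 ≠ 0)
    (hM : M *ᵥ x = μ • x) (hN : N *ᵥ x = ν • x)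
    (h : M * N = N * M ∨ M * N = -(N * M)) : M * N = N * M := by
  rcases h with h | h
  · exact h
  · exfalso
    have e1 : (M * N) *ᵥ x = (μ * ν) • x := by
      rw [← mulVec_mulVec, hN, mulVec_smul, hM, smul_smul, mul_comm]
    have e2 : (N * M) *ᵥ x = (μ * ν) • x := by
      rw [← mulVec_mulVec, hM, mulVec_smul, hN, smul_smul, mul_comm]
    have := congrArg (fun P => (P *ᵥ x) a0) h
    simp only [neg_mulVec, e1, e2, Pi.neg_apply, Pi.smul_apply, smul_eq_mul] at this
    have hne : μ * ν * x a0 ≠ 0 := mul_ne_zero (mul_ne_zero hμ hν) hx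
    have : μ * ν * x a0 = 0 := by linear_combination (1/2 : ℂ) * this
    exact hne this

/-- If a product vector `ψ_A ⊗ ψ_B` is a common eigenvector of the operators
`Aᵢ ⊗ Bᵢ` with eigenvalues `±1`, where each pair `Aᵢ, Aⱼ` and each pair `Bᵢ, Bⱼ`
either commutes or anticommutes, then all the operators `(A|B)`-commute. -/
theorem common_product_eigenvector_implies_cut_commute {dA dB n : ℕ}
    (A : Fin n → Matrix (Fin dA) (Fin dA) ℂ)
    (B : Fin n → Matrix (Fin dB) (Fin dB) ℂ)
    (hAherm : ∀ i, (A i).IsHermitian) (hBherm : ∀ i, (B i).IsHermitian)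
    (hAsq : ∀ i, A i * A i = 1) (hBsq : ∀ i, B i * B i = 1)
    (hAcomm : ∀ i j, A i * A j = A j * A i ∨ A i * A j = -(A j * A i))
    (hBcomm : ∀ i j, B i * B j = B j * B i ∨ B i * B j = -(B j * B i))
    (ψA : Fin dA → ℂ) (ψB : Fin dB → ℂ) (hψA : ψA ≠ 0) (hψB : ψB ≠ 0)
    (lam : Fin n → ℂ) (hlam : ∀ i, lam i = 1 ∨ lam i = -1)
    (heig : ∀ i, (A i ⊗ₖ B i) *ᵥ (fun p : Fin dA × Fin dB => ψA p.1 * ψB p.2) =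
      lam i • (fun p : Fin dA × Fin dB => ψA p.1 * ψB p.2)) :
    ∀ i j, A i * A j = A j * A i ∧ B i * B j = B j * B i := by
  obtain ⟨a0, ha0⟩ := Function.ne_iff.mp hψA
  obtain ⟨b0, hb0⟩ := Function.ne_iff.mp hψB
  have ha0 : ψA a0 ≠ 0 := ha0
  have hb0 : ψB b0 ≠ 0 := hb0
  have key : ∀ i, ∃ μ ν : ℂ, μ ≠ 0 ∧ ν ≠ 0 ∧
      A i *ᵥ ψA = μ • ψA ∧ B i *ᵥ ψB = ν • ψB := by
    intro i
    have hlne : lam i ≠ 0 := by rcases hlam i with h | h <;> simp [h]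
    have heq := heig i
    rw [kron_mulVec'] at heq
    refine prod_eig hlne ha0 hb0 fun a b => ?_
    have := congrFun heq (a, b)
    simpa [smul_eq_mul] using this
  intro i j
  obtain ⟨μi, νi, hμi, hνi, hAi, hBi⟩ := key i
  obtain ⟨μj, νj, hμj, hνj, hAj, hBj⟩ := key j
  exact ⟨comm_of_eig hμi hμj ha0 hAi hAj (hAcomm i j),
    comm_of_eig hνi hνj hb0 hBi hBj (hBcomm i j)⟩
end
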